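/- The bound 2 in the equitable matching forest partition theorem is tight: if G=(V,E,A) is a mixed graph consisting of an undirected path with an odd number of edges and no directed edges (A = ∅), then for every partition of E into 2 matching forests F_1, F_2 of G, it holds that ||∂F_1| − |∂F_2|| ≥ 2. -/

import Mathlib

open Finset
open scoped Classical

variable {V : Type*}

/-- An element of the edge set `E ∪ A` of a mixed graph `G = (V, E, A)`:
`Sum.inl e` is an undirected edge, `Sum.inr a` is a directed edge (arc). -/
abbrev MixedEdge (V : Type*) := Sym2 V ⊕ V × V

/-- The edge set `E ∪ A` of the mixed graph `G = (V, E, A)`. -/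
noncomputable def mfGround (E : Finset (Sym2 V)) (A : Finset (V × V)) :
    Finset (MixedEdge V) :=
  E.image Sum.inl ∪ A.image Sum.inr

/-- `f` covers `v`: an undirected edge covers each of its endpoints,
a directed edge covers its head. -/
def MFCovers (f : MixedEdge V) (v : V) : Prop :=
  Sum.elim (fun e => v ∈ e) (fun a => a.2 = v) f

/-- All endpoints of `f` lie in `X`. -/
def MFInduced (f : MixedEdge V) (X : Finset V) : Prop :=
  Sum.elim (fun e => ∀ v ∈ e, v ∈ X) (fun a => a.1 ∈ X ∧ a.2 ∈ X) f

/-- `F ⊆ E ∪ A` is a matching forest of the mixed graph `G = (V, E, A)`: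
every vertex is covered by at most one edge of `F` and the underlying
undirected edge set of `F` is a forest (equivalently, every nonempty
`X ⊆ V` induces at most `|X| - 1` edges of `F`). -/
def IsMatchingForest (E : Finset (Sym2 V)) (A : Finset (V × V))
    (F : Finset (MixedEdge V)) : Prop :=
  F ⊆ mfGround E A ∧
    (∀ v : V, (F.filter (fun f => MFCovers f v)).card ≤ 1) ∧
    ∀ X : Finset V, X.Nonempty →
      (F.filter (fun f => MFInduced f X)).card ≤ X.card - 1

/-- `∂F`: the set of vertices covered by at least one edge of `F`. -/
noncomputable def mfBoundary [Fintype V] (F : Finset (MixedEdge V)) : Finset V :=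
  univ.filter (fun v => ∃ f ∈ F, MFCovers f v)


lemma mfBoundary_card_eq {V : Type*} [Fintype V] (E : Finset (Sym2 V))
    (hE : ∀ e ∈ E, ¬ e.IsDiag) (F : Finset (MixedEdge V))
    (hF : F ⊆ mfGround E (∅ : Finset (V × V)))
    (hdeg : ∀ v : V, (F.filter (fun f => MFCovers f v)).card ≤ 1) :
    (mfBoundary F).card = 2 * F.card := by
  classical
  have h1 : (mfBoundary F).card = ∑ v : V, (F.filter (fun f => MFCovers f v)).card := by
    rw [mfBoundary, Finset.card_filter]
    refine Finset.sum_congr rfl fun v _ => ?_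
    by_cases h : ∃ f ∈ F, MFCovers f v
    · rw [if_pos h]
      have hle := hdeg v
      have hge : 1 ≤ (F.filter (fun f => MFCovers f v)).card :=
        Finset.card_pos.mpr (by obtain ⟨f, hf, hc⟩ := h; exact ⟨f, Finset.mem_filter.mpr ⟨hf, hc⟩⟩)
      omega
    · rw [if_neg h]
      symm
      simp only [Finset.card_eq_zero, Finset.filter_eq_empty_iff]
      intro f hf hc
      exact h ⟨f, hf, hc⟩
  rw [h1]
  have h2 : ∀ v : V, (F.filter (fun f => MFCovers f v)).card
      = ∑ f ∈ F, if MFCovers f v then 1 else 0 := fun v => Finset.card_filter _ _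
  simp only [h2]
  rw [Finset.sum_comm]
  rw [Finset.sum_congr rfl fun f hf => ?_, Finset.sum_const, smul_eq_mul, mul_comm]
  have hf' := hF hf
  simp only [mfGround, Finset.image_empty, Finset.union_empty, Finset.mem_image] at hf'
  obtain ⟨e, he, rfl⟩ := hf'
  have : (∑ v : V, if MFCovers (Sum.inl e) v then 1 else 0) = (Finset.univ.filter (fun v => v ∈ e)).card := by
    rw [Finset.card_filter]
    exact Finset.sum_congr rfl fun v _ => by simp [MFCovers]; congr
  rw [this]
  induction e using Sym2.ind with
  | _ a b =>
    have hab : a ≠ b := fun h => hE _ he (by simp [Sym2.isDiag_iff_proj_eq, h])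
    have : Finset.univ.filter (fun v => v ∈ s(a, b)) = {a, b} := by
      ext v; simp [Sym2.mem_iff]
    rw [this, Finset.card_insert_of_notMem (by simp [hab]), Finset.card_singleton]

/-- The bound `2` is tight: for a mixed graph consisting of an
undirected path with an odd number `n` of edges and no arcs, every partition of
the edge set into two matching forests `F₁, F₂` satisfies `||∂F₁| - |∂F₂|| ≥ 2`. -/
theorem equitable_matchingForest_bound_tight
    (n : ℕ) (hn : Odd n)
    (E : Finset (Sym2 (Fin (n + 1))))
    (hE : E = (Finset.univ : Finset (Fin n)).image
      (fun i => s(Fin.castSucc i, Fin.succ i)))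
    (F₁ F₂ : Finset (MixedEdge (Fin (n + 1))))
    (h₁ : IsMatchingForest E (∅ : Finset (Fin (n + 1) × Fin (n + 1))) F₁)
    (h₂ : IsMatchingForest E (∅ : Finset (Fin (n + 1) × Fin (n + 1))) F₂)
    (hd : Disjoint F₁ F₂)
    (hu : F₁ ∪ F₂ = mfGround E (∅ : Finset (Fin (n + 1) × Fin (n + 1)))) :
    2 ≤ |((mfBoundary F₁).card : ℤ) - ((mfBoundary F₂).card : ℤ)| := by
  classical
  -- basic facts about E
  have hEdiag : ∀ e ∈ E, ¬ e.IsDiag := by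
    intro e he
    rw [hE] at he
    simp only [Finset.mem_image, Finset.mem_univ, true_and] at he
    obtain ⟨i, rfl⟩ := he
    simp only [Sym2.isDiag_iff_proj_eq]
    intro h
    have : (i : ℕ) = (i : ℕ) + 1 := by simpa using congrArg Fin.val h
    omega
  have hEcard : E.card = n := by
    rw [hE, Finset.card_image_of_injective _ ?_, Finset.card_univ, Fintype.card_fin]
    intro i j hij
    rw [Sym2.eq_iff] at hij
    rcases hij with ⟨h, _⟩ | ⟨h1, h2⟩
    · exact Fin.castSucc_injective _ h
    · have := congrArg Fin.val h1
      have := congrArg Fin.val h2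
      simp [Fin.val_succ] at *
      omega
  have hb1 := mfBoundary_card_eq E hEdiag F₁ h₁.1 h₁.2.1
  have hb2 := mfBoundary_card_eq E hEdiag F₂ h₂.1 h₂.2.1
  have hsum : F₁.card + F₂.card = n := by
    have : (F₁ ∪ F₂).card = F₁.card + F₂.card := Finset.card_union_of_disjoint hd
    rw [hu] at this
    have hg : (mfGround E (∅ : Finset (Fin (n + 1) × Fin (n + 1)))).card = n := by
      simp [mfGround, Finset.card_image_of_injective _ Sum.inl_injective, hEcard]
    omega
  rw [hb1, hb2]
  obtain ⟨k, hk⟩ := hn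
  have hne : F₁.card ≠ F₂.card := by omega
  have : ((2 * F₁.card : ℕ) : ℤ) - ((2 * F₂.card : ℕ) : ℤ) = 2 * ((F₁.card : ℤ) - F₂.card) := by
    push_cast; ring
  rw [this, abs_mul]
  have : (1 : ℤ) ≤ |(F₁.card : ℤ) - F₂.card| := by
    have hz : (F₁.card : ℤ) - F₂.card ≠ 0 :=
      sub_ne_zero.mpr (by exact_mod_cast hne)
    exact Int.one_le_abs hz
  simp only [abs_two]
  linarith
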